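/- arXiv:1811.06941 — 4 statements merged into one kernel-verified Lean document; each statement's English description precedes it below -/
import Mathlib

section
/- Let V be a finite-dimensional real inner product space with symmetric positive definite bilinear form a, inducing operator S via ⟨S v, w⟩ = a(v,w). Let V₀, …, V_J be finite-dimensional spaces with SPD bilinear forms a_j inducing operators S_j, and linear maps R_j : V_j → V with V = Σ_j R_j V_j. Define the additive Schwarz preconditioner B = Σ_j R_j S_j^{-1} R_jᵗ. Then λ_min(BS) = min_{v≠0} a(v,v) / ( min over decompositions v = Σ_j R_j v_j of Σ_j a_j(v_j, v_j) ). -/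
open scoped RealInnerProductSpace

section Aux

variable {V : Type*} [NormedAddCommGroup V] [InnerProductSpace ℝ V]

/-- A sum of rank-one operators `v ↦ ∑ i, (c i * ⟪b i, v⟫) • b i`. -/
noncomputable def rankOneSum {n : ℕ} (b : Fin n → V) (c : Fin n → ℝ) : V →ₗ[ℝ] V where
  toFun v := ∑ i, (c i * ⟪b i, v⟫) • b i
  map_add' x y := by
    rw [← Finset.sum_add_distrib]
    refine Finset.sum_congr rfl fun i _ => ?_
    rw [inner_add_right, mul_add, add_smul]
  map_smul' r x := by
    simp only [RingHom.id_apply, real_inner_smul_right, Finset.smul_sum, smul_smul]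
    refine Finset.sum_congr rfl fun i _ => ?_
    ring_nf

lemma rankOneSum_apply {n : ℕ} (b : Fin n → V) (c : Fin n → ℝ) (v : V) :
    rankOneSum b c v = ∑ i, (c i * ⟪b i, v⟫) • b i := rfl

lemma rankOneSum_apply_basis {n : ℕ} (b : OrthonormalBasis (Fin n) ℝ V) (c : Fin n → ℝ)
    (i : Fin n) : rankOneSum (⇑b) c (b i) = c i • b i := by
  rw [rankOneSum_apply]
  rw [Finset.sum_eq_single i]
  · rw [orthonormal_iff_ite.mp b.orthonormal i i]
    simp
  · intro j _ hj
    rw [orthonormal_iff_ite.mp b.orthonormal j i, if_neg hj]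
    simp
  · simp

lemma rankOneSum_symm {n : ℕ} (b : Fin n → V) (c : Fin n → ℝ) (v w : V) :
    ⟪rankOneSum b c v, w⟫ = ⟪v, rankOneSum b c w⟫ := by
  rw [rankOneSum_apply, rankOneSum_apply, sum_inner, inner_sum]
  refine Finset.sum_congr rfl fun i _ => ?_
  rw [real_inner_smul_left, real_inner_smul_right, real_inner_comm (b i) v]
  ring

end Aux

/-- additive Schwarz lemma: the minimal eigenvalue of BS is
characterized by λ_min(BS) = min_{v≠0} a(v,v) / min_{v = Σ Rⱼ vⱼ} Σ aⱼ(vⱼ,vⱼ). -/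
theorem stmt_8 {V : Type*} [NormedAddCommGroup V] [InnerProductSpace ℝ V]
    [FiniteDimensional ℝ V]
    {J : ℕ} (Vj : Fin J → Type*) [∀ j, NormedAddCommGroup (Vj j)]
    [∀ j, InnerProductSpace ℝ (Vj j)] [∀ j, FiniteDimensional ℝ (Vj j)]
    (S : V →ₗ[ℝ] V)
    (hSsa : ∀ v w : V, ⟪S v, w⟫ = ⟪v, S w⟫) (hSpd : ∀ v : V, v ≠ 0 → 0 < ⟪S v, v⟫)
    (Sj Sjinv : ∀ j, Vj j →ₗ[ℝ] Vj j)
    (hSjsa : ∀ j (x y : Vj j), ⟪Sj j x, y⟫ = ⟪x, Sj j y⟫)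
    (hSjpd : ∀ j (x : Vj j), x ≠ 0 → 0 < ⟪Sj j x, x⟫)
    (hSjinv₁ : ∀ j, Sjinv j ∘ₗ Sj j = LinearMap.id)
    (hSjinv₂ : ∀ j, Sj j ∘ₗ Sjinv j = LinearMap.id)
    (R : ∀ j, Vj j →ₗ[ℝ] V)
    (hspan : (⨆ j, LinearMap.range (R j)) = ⊤)
    (B : V →ₗ[ℝ] V)
    (hB : B = ∑ j, (R j) ∘ₗ (Sjinv j) ∘ₗ (LinearMap.adjoint (R j)))
    (lammin : ℝ)
    (hmin : IsLeast {μ : ℝ | Module.End.HasEigenvalue (B ∘ₗ S) μ} lammin) :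
    IsLeast {r : ℝ | ∃ v : V, v ≠ 0 ∧ ∃ m : ℝ,
      IsLeast {t : ℝ | ∃ u : ∀ j, Vj j,
        (∑ j, R j (u j)) = v ∧ t = ∑ j, ⟪Sj j (u j), u j⟫} m ∧
      r = ⟪S v, v⟫ / m} lammin := by
  -- basic facts about Sjinv
  have hSjinv_apply₁ : ∀ j (x : Vj j), Sjinv j (Sj j x) = x := fun j x =>
    congrFun (congrArg DFunLike.coe (hSjinv₁ j)) x
  have hSjinv_apply₂ : ∀ j (x : Vj j), Sj j (Sjinv j x) = x := fun j x =>
    congrFun (congrArg DFunLike.coe (hSjinv₂ j)) x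
  have hSjinv_sa : ∀ j (x y : Vj j), ⟪Sjinv j x, y⟫ = ⟪x, Sjinv j y⟫ := by
    intro j x y
    have h := hSjsa j (Sjinv j x) (Sjinv j y)
    rw [hSjinv_apply₂, hSjinv_apply₂] at h
    exact h.symm
  have hSjinv_nonneg : ∀ j (x : Vj j), 0 ≤ ⟪Sjinv j x, x⟫ := by
    intro j x
    rcases eq_or_ne x 0 with rfl | hx
    · simp
    have hy : Sjinv j x ≠ 0 := by
      intro h
      apply hx
      rw [← hSjinv_apply₂ j x, h, map_zero]
    have := hSjpd j (Sjinv j x) hy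
    rw [hSjinv_apply₂ j x] at this
    rw [real_inner_comm]
    exact le_of_lt this
  have hSjinv_pos : ∀ j (x : Vj j), x ≠ 0 → 0 < ⟪Sjinv j x, x⟫ := by
    intro j x hx
    have hy : Sjinv j x ≠ 0 := by
      intro h
      apply hx
      rw [← hSjinv_apply₂ j x, h, map_zero]
    have := hSjpd j (Sjinv j x) hy
    rw [hSjinv_apply₂ j x] at this
    rwa [real_inner_comm]
  -- decompose ⟪B v, w⟫
  have hBapply : ∀ v : V, B v = ∑ j, R j (Sjinv j (LinearMap.adjoint (R j) v)) := by
    intro v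
    rw [hB]
    simp [LinearMap.sum_apply, LinearMap.comp_apply]
  have hBinner : ∀ v w : V,
      ⟪B v, w⟫ = ∑ j, ⟪Sjinv j (LinearMap.adjoint (R j) v), LinearMap.adjoint (R j) w⟫ := by
    intro v w
    rw [hBapply, sum_inner]
    refine Finset.sum_congr rfl fun j _ => ?_
    rw [LinearMap.adjoint_inner_right]
  -- B is symmetric
  have hBsym : B.IsSymmetric := by
    intro v w
    rw [hBinner v w]
    rw [real_inner_comm (B w) v]
    rw [hBinner w v]
    refine Finset.sum_congr rfl fun j _ => ?_
    rw [hSjinv_sa, real_inner_comm]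
  -- B is positive definite
  have hBnonneg : ∀ v : V, 0 ≤ ⟪B v, v⟫ := by
    intro v
    rw [hBinner]
    exact Finset.sum_nonneg fun j _ => hSjinv_nonneg j _
  have hBdef : ∀ v : V, ⟪B v, v⟫ = 0 → v = 0 := by
    intro v hv
    rw [hBinner] at hv
    have hterm : ∀ j ∈ Finset.univ, (⟪Sjinv j (LinearMap.adjoint (R j) v),
        LinearMap.adjoint (R j) v⟫ : ℝ) = 0 :=
      (Finset.sum_eq_zero_iff_of_nonneg (fun j _ => hSjinv_nonneg j _)).mp hv
    have hadj : ∀ j, LinearMap.adjoint (R j) v = 0 := by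
      intro j
      by_contra h
      exact absurd (hterm j (Finset.mem_univ j)) (ne_of_gt (hSjinv_pos j _ h))
    -- v is orthogonal to the whole space
    have horth : ∀ w : V, ⟪v, w⟫ = 0 := by
      intro w
      have hw : w ∈ (⨆ j, LinearMap.range (R j)) := by rw [hspan]; trivial
      induction hw using Submodule.iSup_induction' with
      | mem j x hx =>
          obtain ⟨u, rfl⟩ := hx
          rw [← LinearMap.adjoint_inner_left, hadj j, inner_zero_left]
      | zero => exact inner_zero_right v
      | add x _ y _ hx hy => rw [inner_add_right, hx, hy, add_zero]
    have := horth v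
    rwa [inner_self_eq_zero] at this
  have hBpos : ∀ v : V, v ≠ 0 → 0 < ⟪B v, v⟫ := by
    intro v hv
    rcases lt_or_eq_of_le (hBnonneg v) with h | h
    · exact h
    · exact absurd (hBdef v h.symm) hv
  -- B is bijective; A := B⁻¹
  have hBinj : Function.Injective B := by
    rw [← LinearMap.ker_eq_bot, LinearMap.ker_eq_bot']
    intro v hv
    by_contra h
    have := hBpos v h
    rw [hv, inner_zero_left] at this
    exact lt_irrefl 0 this
  have hBbij : Function.Bijective B :=
    ⟨hBinj, (LinearMap.injective_iff_surjective).mp hBinj⟩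
  let eB : V ≃ₗ[ℝ] V := LinearEquiv.ofBijective B hBbij
  set A : V →ₗ[ℝ] V := (eB.symm : V →ₗ[ℝ] V) with hA
  have hBA : ∀ v : V, B (A v) = v := fun v => eB.apply_symm_apply v
  have hAB : ∀ v : V, A (B v) = v := fun v => eB.symm_apply_apply v
  have hAsym : ∀ v w : V, ⟪A v, w⟫ = ⟪v, A w⟫ := by
    intro v w
    conv_lhs => rw [← hBA w]
    rw [← hBsym, hBA]
  have hApos : ∀ v : V, v ≠ 0 → 0 < ⟪A v, v⟫ := by
    intro v hv
    have hAv : A v ≠ 0 := by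
      intro h
      apply hv
      rw [← hBA v, h, map_zero]
    have := hBpos (A v) hAv
    rwa [hBA, real_inner_comm] at this
  -- Lions' lemma: the minimal decomposition energy is ⟪A v, v⟫
  have hLions : ∀ v : V, IsLeast {t : ℝ | ∃ u : ∀ j, Vj j,
      (∑ j, R j (u j)) = v ∧ t = ∑ j, ⟪Sj j (u j), u j⟫} ⟪A v, v⟫ := by
    intro v
    set ustar : ∀ j, Vj j := fun j => Sjinv j (LinearMap.adjoint (R j) (A v)) with hustar
    have hsum : (∑ j, R j (ustar j)) = v := by
      rw [← hBapply, hBA]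
    have hSjustar : ∀ j, Sj j (ustar j) = LinearMap.adjoint (R j) (A v) := fun j =>
      hSjinv_apply₂ j _
    have hcross : ∀ (u : ∀ j, Vj j), (∑ j, ⟪Sj j (ustar j), u j⟫) = ⟪A v, ∑ j, R j (u j)⟫ := by
      intro u
      rw [inner_sum]
      refine Finset.sum_congr rfl fun j _ => ?_
      rw [hSjustar, LinearMap.adjoint_inner_left]
    have henergy : (∑ j, ⟪Sj j (ustar j), ustar j⟫) = ⟪A v, v⟫ := by
      rw [hcross, hsum]
    constructor
    · exact ⟨ustar, hsum, henergy.symm⟩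
    · rintro t ⟨u, hu, rfl⟩
      -- expand ∑ ⟪Sj (uj), uj⟫ = ∑ ⟪Sj(ustar+d), ustar+d⟫
      set d : ∀ j, Vj j := fun j => u j - ustar j with hd
      have hdsum : (∑ j, R j (d j)) = 0 := by
        simp only [hd, map_sub]
        rw [Finset.sum_sub_distrib, hu, hsum, sub_self]
      have hcrossd : (∑ j, ⟪Sj j (ustar j), d j⟫) = 0 := by
        rw [hcross, hdsum, inner_zero_right]
      have hexp : (∑ j, ⟪Sj j (u j), u j⟫)
          = ⟪A v, v⟫ + 2 * (∑ j, ⟪Sj j (ustar j), d j⟫) + ∑ j, ⟪Sj j (d j), d j⟫ := by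
        rw [← henergy, Finset.mul_sum, ← Finset.sum_add_distrib, ← Finset.sum_add_distrib]
        refine Finset.sum_congr rfl fun j _ => ?_
        have : u j = ustar j + d j := by simp [hd]
        rw [this, map_add, inner_add_left, inner_add_right, inner_add_right]
        have h1 : ⟪Sj j (d j), ustar j⟫ = ⟪Sj j (ustar j), d j⟫ := by
          rw [hSjsa, real_inner_comm]
        rw [h1]; ring
      rw [hexp, hcrossd]
      have : 0 ≤ ∑ j, ⟪Sj j (d j), d j⟫ := by
        refine Finset.sum_nonneg fun j _ => ?_
        rcases eq_or_ne (d j) 0 with h | h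
        · simp [h]
        · exact le_of_lt (hSjpd j _ h)
      linarith
  -- Nontrivial V from the existence of an eigenvector
  obtain ⟨v₀, hv₀⟩ := hmin.1.exists_hasEigenvector
  have : Nontrivial V := nontrivial_of_ne v₀ 0 hv₀.2
  -- square root of B via spectral theorem
  set n := Module.finrank ℝ V with hn
  have hfr : Module.finrank ℝ V = n := rfl
  set b := hBsym.eigenvectorBasis hfr with hb
  set μ := hBsym.eigenvalues hfr with hμ
  have hBb : ∀ i, B (b i) = μ i • b i := fun i => hBsym.apply_eigenvectorBasis hfr i
  have hμpos : ∀ i, 0 < μ i := by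
    intro i
    have hbne : b i ≠ 0 := b.toBasis.ne_zero i
    have := hBpos (b i) hbne
    rw [hBb i, real_inner_smul_left, real_inner_self_eq_norm_sq, b.orthonormal.1 i] at this
    simpa using this
  set Q : V →ₗ[ℝ] V := rankOneSum (⇑b) (fun i => Real.sqrt (μ i)) with hQ
  set P : V →ₗ[ℝ] V := rankOneSum (⇑b) (fun i => (Real.sqrt (μ i))⁻¹) with hP
  have hQb : ∀ i, Q (b i) = Real.sqrt (μ i) • b i := fun i => rankOneSum_apply_basis b _ i
  have hPb : ∀ i, P (b i) = (Real.sqrt (μ i))⁻¹ • b i := fun i => rankOneSum_apply_basis b _ i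
  have hsqrtne : ∀ i, Real.sqrt (μ i) ≠ 0 := fun i =>
    ne_of_gt (Real.sqrt_pos.mpr (hμpos i))
  have hext : ∀ (F G : V →ₗ[ℝ] V), (∀ i, F (b i) = G (b i)) → ∀ v, F v = G v := by
    intro F G h v
    rw [← b.sum_repr' v, map_sum, map_sum]
    simp only [map_smul, h]
  have hQQ : ∀ v : V, Q (Q v) = B v := by
    intro v
    refine hext (Q ∘ₗ Q) B (fun i => ?_) v
    show Q (Q (b i)) = B (b i)
    rw [hQb, map_smul, hQb, smul_smul, Real.mul_self_sqrt (le_of_lt (hμpos i)), hBb]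
  have hQP : ∀ v : V, Q (P v) = v := by
    intro v
    refine hext (Q ∘ₗ P) LinearMap.id (fun i => ?_) v
    show Q (P (b i)) = b i
    rw [hPb, map_smul, hQb, smul_smul, inv_mul_cancel₀ (hsqrtne i), one_smul]
  have hPQ : ∀ v : V, P (Q v) = v := by
    intro v
    refine hext (P ∘ₗ Q) LinearMap.id (fun i => ?_) v
    show P (Q (b i)) = b i
    rw [hQb, map_smul, hPb, smul_smul, mul_inv_cancel₀ (hsqrtne i), one_smul]
  have hQsym : ∀ v w : V, ⟪Q v, w⟫ = ⟪v, Q w⟫ := fun v w => rankOneSum_symm _ _ v w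
  have hPsym : ∀ v w : V, ⟪P v, w⟫ = ⟪v, P w⟫ := fun v w => rankOneSum_symm _ _ v w
  have hAP : ∀ v : V, A v = P (P v) := by
    intro v
    apply hBinj
    rw [hBA, ← hQQ, hQP, hQP]
  -- M := Q S Q is symmetric and similar to B S
  set M : V →ₗ[ℝ] V := Q ∘ₗ S ∘ₗ Q with hM
  have hMapply : ∀ v, M v = Q (S (Q v)) := fun v => rfl
  have hMsym : M.IsSymmetric := by
    intro v w
    rw [hMapply, hMapply, hQsym, hSsa, hQsym]
  have hBSQ : ∀ x : V, (B ∘ₗ S) (Q x) = Q (M x) := by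
    intro x
    show B (S (Q x)) = Q (M x)
    rw [hMapply, hQQ]
  -- eigenvalues of M are eigenvalues of B∘S
  have heig : ∀ t : ℝ, Module.End.HasEigenvalue M t → Module.End.HasEigenvalue (B ∘ₗ S) t := by
    intro t ht
    obtain ⟨x, hx⟩ := ht.exists_hasEigenvector
    have hQx : Q x ≠ 0 := by
      intro h
      apply hx.2
      rw [← hPQ x, h, map_zero]
    refine Module.End.hasEigenvalue_of_hasEigenvector ⟨?_, hQx⟩
    rw [Module.End.mem_eigenspace_iff, hBSQ, hx.apply_eq_smul, map_smul]
  -- the minimal Rayleigh quotient of M is an eigenvalue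
  set mu : ℝ := ⨅ x : { x : V // x ≠ 0 }, RCLike.re (⟪M x, x⟫) / ‖(x : V)‖ ^ 2 with hmu
  have hmueig : Module.End.HasEigenvalue M mu := by
    have := hMsym.hasEigenvalue_iInf_of_finiteDimensional (𝕜 := ℝ)
    simpa [hmu] using this
  have hlam_le_mu : lammin ≤ mu := hmin.2 (heig mu hmueig)
  -- Rayleigh quotients are bounded below by 0
  have hray_nonneg : ∀ x : { x : V // x ≠ 0 },
      (0 : ℝ) ≤ RCLike.re (⟪M (x : V), (x : V)⟫) / ‖(x : V)‖ ^ 2 := by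
    intro x
    apply div_nonneg
    · show (0 : ℝ) ≤ ⟪M (x : V), (x : V)⟫
      rw [hMapply, hQsym]
      rcases eq_or_ne (Q (x : V)) 0 with h | h
      · rw [h]; simp
      · exact le_of_lt (hSpd _ h)
    · positivity
  have hmu_le : ∀ x : { x : V // x ≠ 0 },
      mu ≤ RCLike.re (⟪M (x : V), (x : V)⟫) / ‖(x : V)‖ ^ 2 := by
    intro x
    refine ciInf_le ⟨0, ?_⟩ x
    rintro t ⟨y, rfl⟩
    exact hray_nonneg y
  -- key identity: Rayleigh quotient of M at P v equals ⟪S v, v⟫ / ⟪A v, v⟫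
  have hkey : ∀ v : V, v ≠ 0 → lammin ≤ ⟪S v, v⟫ / ⟪A v, v⟫ := by
    intro v hv
    have hPv : P v ≠ 0 := by
      intro h
      apply hv
      rw [← hQP v, h, map_zero]
    have hnum : ⟪M (P v), P v⟫ = ⟪S v, v⟫ := by
      rw [hMapply, hQP, hQsym, hQP]
    have hden : ‖P v‖ ^ 2 = ⟪A v, v⟫ := by
      rw [← real_inner_self_eq_norm_sq, hPsym, ← hAP, real_inner_comm]
    have := le_trans hlam_le_mu (hmu_le ⟨P v, hPv⟩)
    calc lammin ≤ RCLike.re (⟪M (P v), P v⟫) / ‖P v‖ ^ 2 := this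
      _ = ⟪S v, v⟫ / ⟪A v, v⟫ := by rw [hden]; simp [hnum]
  constructor
  · -- lammin is attained
    have happ : (B ∘ₗ S) v₀ = lammin • v₀ := hv₀.apply_eq_smul
    have hSv₀ : S v₀ = lammin • A v₀ := by
      apply hBinj
      rw [map_smul, hBA]
      exact happ
    refine ⟨v₀, hv₀.2, ⟪A v₀, v₀⟫, hLions v₀, ?_⟩
    rw [hSv₀, real_inner_smul_left]
    rw [mul_div_assoc, div_self (ne_of_gt (hApos v₀ hv₀.2)), mul_one]
  · -- lammin is a lower bound
    rintro r ⟨v, hv, m, hm, rfl⟩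
    have hmeq : m = ⟪A v, v⟫ := (IsLeast.unique hm (hLions v))
    rw [hmeq]
    exact hkey v hv
end

section
/- In the additive Schwarz setting (V = Σ_j R_j V_j, B = Σ_j R_j S_j^{-1} R_jᵗ), the maximal eigenvalue satisfies λ_max(BS) = max_{v≠0} a(v,v) / ( min over decompositions v = Σ_j R_j v_j of Σ_j a_j(v_j, v_j) ). -/
open scoped RealInnerProductSpace

private lemma quad_coeff_zero {a b : ℝ} (h : ∀ t : ℝ, a * t ^ 2 + b * t ≤ 0) : b = 0 := by
  by_contra hb
  have hden : (0:ℝ) < |a| + 1 := by positivity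
  set c : ℝ := (|a| + 1)⁻¹ with hc
  have hc0 : (0:ℝ) < c := by positivity
  have ht := h (b * c)
  have h1 : (|a| + 1) * c = 1 := mul_inv_cancel₀ (ne_of_gt hden)
  have hb2 : (0:ℝ) < b ^ 2 := by positivity
  have hac : c - 1 ≤ a * c := by nlinarith [neg_abs_le a, hc0.le]
  have key2 : b ^ 2 * c * (c - 1) ≤ b ^ 2 * c * (a * c) :=
    mul_le_mul_of_nonneg_left hac (mul_pos hb2 hc0).le
  nlinarith [ht, key2, mul_pos (mul_pos hb2 hc0) hc0]

/-- additive Schwarz lemma: the maximal eigenvalue of BS is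
characterized by λ_max(BS) = max_{v≠0} a(v,v) / min_{v = Σ Rⱼ vⱼ} Σ aⱼ(vⱼ,vⱼ). -/
theorem stmt_9 {V : Type*} [NormedAddCommGroup V] [InnerProductSpace ℝ V]
    [FiniteDimensional ℝ V]
    {J : ℕ} (Vj : Fin J → Type*) [∀ j, NormedAddCommGroup (Vj j)]
    [∀ j, InnerProductSpace ℝ (Vj j)] [∀ j, FiniteDimensional ℝ (Vj j)]
    (S : V →ₗ[ℝ] V)
    (hSsa : ∀ v w : V, ⟪S v, w⟫ = ⟪v, S w⟫) (hSpd : ∀ v : V, v ≠ 0 → 0 < ⟪S v, v⟫)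
    (Sj Sjinv : ∀ j, Vj j →ₗ[ℝ] Vj j)
    (hSjsa : ∀ j (x y : Vj j), ⟪Sj j x, y⟫ = ⟪x, Sj j y⟫)
    (hSjpd : ∀ j (x : Vj j), x ≠ 0 → 0 < ⟪Sj j x, x⟫)
    (hSjinv₁ : ∀ j, Sjinv j ∘ₗ Sj j = LinearMap.id)
    (hSjinv₂ : ∀ j, Sj j ∘ₗ Sjinv j = LinearMap.id)
    (R : ∀ j, Vj j →ₗ[ℝ] V)
    (hspan : (⨆ j, LinearMap.range (R j)) = ⊤)
    (B : V →ₗ[ℝ] V)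
    (hB : B = ∑ j, (R j) ∘ₗ (Sjinv j) ∘ₗ (LinearMap.adjoint (R j)))
    (lammax : ℝ)
    (hmax : IsGreatest {μ : ℝ | Module.End.HasEigenvalue (B ∘ₗ S) μ} lammax) :
    IsGreatest {r : ℝ | ∃ v : V, v ≠ 0 ∧ ∃ m : ℝ,
      IsLeast {t : ℝ | ∃ u : ∀ j, Vj j,
        (∑ j, R j (u j)) = v ∧ t = ∑ j, ⟪Sj j (u j), u j⟫} m ∧
      r = ⟪S v, v⟫ / m} lammax := by
  classical
  -- elementary consequences of the inverse hypotheses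
  have hJinv₂ : ∀ j (x : Vj j), Sj j (Sjinv j x) = x := by
    intro j x
    have := LinearMap.congr_fun (hSjinv₂ j) x
    simpa using this
  have hSjnn : ∀ j (x : Vj j), 0 ≤ ⟪Sj j x, x⟫ := by
    intro j x
    rcases eq_or_ne x 0 with h | h
    · simp [h]
    · exact (hSjpd j x h).le
  have hJnn : ∀ j (x : Vj j), 0 ≤ ⟪Sjinv j x, x⟫ := by
    intro j x
    have h := hSjnn j (Sjinv j x)
    rw [hJinv₂] at h
    rwa [real_inner_comm] at h
  have hJzero : ∀ j (x : Vj j), ⟪Sjinv j x, x⟫ = 0 → x = 0 := by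
    intro j x hx
    have h1 : ⟪Sj j (Sjinv j x), Sjinv j x⟫ = 0 := by
      rw [hJinv₂, real_inner_comm]
      exact hx
    have h2 : Sjinv j x = 0 := by
      by_contra h
      exact absurd h1 (ne_of_gt (hSjpd j _ h))
    have := hJinv₂ j x
    rw [h2] at this
    simpa using this.symm
  have hJsa : ∀ j (x y : Vj j), ⟪Sjinv j x, y⟫ = ⟪x, Sjinv j y⟫ := by
    intro j x y
    calc ⟪Sjinv j x, y⟫ = ⟪Sjinv j x, Sj j (Sjinv j y)⟫ := by rw [hJinv₂]
      _ = ⟪Sj j (Sjinv j x), Sjinv j y⟫ := (hSjsa j _ _).symm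
      _ = ⟪x, Sjinv j y⟫ := by rw [hJinv₂]
  -- B pointwise
  have hBapp : ∀ v : V, B v = ∑ j, R j (Sjinv j (LinearMap.adjoint (R j) v)) := by
    intro v; rw [hB]; simp [LinearMap.sum_apply, LinearMap.comp_apply]
  have hBterm : ∀ v w : V, ⟪B v, w⟫ =
      ∑ j, ⟪Sjinv j (LinearMap.adjoint (R j) v), LinearMap.adjoint (R j) w⟫ := by
    intro v w
    rw [hBapp, sum_inner]
    refine Finset.sum_congr rfl fun j _ => ?_
    rw [real_inner_comm, LinearMap.adjoint_inner_right]
    exact real_inner_comm _ _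
  have hBnn : ∀ v : V, 0 ≤ ⟪B v, v⟫ := by
    intro v
    rw [hBterm]
    exact Finset.sum_nonneg fun j _ => hJnn j _
  have hBzero : ∀ v : V, ⟪B v, v⟫ = 0 → v = 0 := by
    intro v hv
    rw [hBterm] at hv
    have hall : ∀ j, LinearMap.adjoint (R j) v = 0 := by
      intro j
      have hterm := (Finset.sum_eq_zero_iff_of_nonneg (fun j _ => hJnn j _)).mp hv j
        (Finset.mem_univ j)
      exact hJzero j _ hterm
    have hvorth : v ∈ (⨆ j, LinearMap.range (R j))ᗮ := by
      rw [← Submodule.iInf_orthogonal]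
      refine Submodule.mem_iInf _ |>.mpr fun j => ?_
      rw [Submodule.mem_orthogonal]
      rintro u ⟨x, rfl⟩
      rw [real_inner_comm, ← LinearMap.adjoint_inner_left, hall j, inner_zero_left]
    rw [hspan, Submodule.top_orthogonal_eq_bot] at hvorth
    simpa using hvorth
  have hBinj : Function.Injective B := by
    rw [← LinearMap.ker_eq_bot]
    refine (Submodule.eq_bot_iff _).mpr fun v hv => ?_
    have : B v = 0 := hv
    exact hBzero v (by rw [this, inner_zero_left])
  have hBsurj : Function.Surjective B :=
    (LinearMap.injective_iff_surjective).mp hBinj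
  set e : V ≃ₗ[ℝ] V := LinearEquiv.ofBijective B ⟨hBinj, hBsurj⟩ with he
  set P : V →ₗ[ℝ] V := (e.symm : V →ₗ[ℝ] V) with hPdef
  have hBP : ∀ v : V, B (P v) = v := by
    intro v
    have := e.apply_symm_apply v
    exact this
  have hPB : ∀ v : V, P (B v) = v := by
    intro v
    have := e.symm_apply_apply v
    exact this
  have hBpos : ∀ v : V, v ≠ 0 → 0 < ⟪B v, v⟫ := by
    intro v hv
    rcases lt_or_eq_of_le (hBnn v) with h | h
    · exact h
    · exact absurd (hBzero v h.symm) hv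
  have hBsa : ∀ x y : V, ⟪B x, y⟫ = ⟪x, B y⟫ := by
    intro x y
    have h2 := hBterm y x
    rw [hBterm x y, real_inner_comm (B y) x, h2]
    refine Finset.sum_congr rfl fun j _ => ?_
    rw [hJsa, real_inner_comm]
  have hPsa : ∀ x y : V, ⟪P x, y⟫ = ⟪x, P y⟫ := by
    intro x y
    conv_lhs => rw [← hBP y]
    rw [← hBsa]
    conv_rhs => rw [← hBP x]
  have hPpos : ∀ v : V, v ≠ 0 → 0 < ⟪P v, v⟫ := by
    intro v hv
    have hPv : P v ≠ 0 := by
      intro h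
      apply hv
      rw [← hBP v, h, map_zero]
    have := hBpos (P v) hPv
    rwa [hBP, real_inner_comm] at this
  -- the minimum characterization
  have key : ∀ v : V, IsLeast {t : ℝ | ∃ u : ∀ j, Vj j,
      (∑ j, R j (u j)) = v ∧ t = ∑ j, ⟪Sj j (u j), u j⟫} (⟪P v, v⟫) := by
    intro v
    have hBw : B (P v) = v := hBP v
    constructor
    · refine ⟨fun j => Sjinv j (LinearMap.adjoint (R j) (P v)), ?_, ?_⟩
      · rw [← hBapp, hBw]
      · have hterm : ∀ j, ⟪Sj j (Sjinv j (LinearMap.adjoint (R j) (P v))),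
            Sjinv j (LinearMap.adjoint (R j) (P v))⟫
            = ⟪P v, R j (Sjinv j (LinearMap.adjoint (R j) (P v)))⟫ := by
          intro j
          rw [hJinv₂, LinearMap.adjoint_inner_left]
        rw [Finset.sum_congr rfl fun j _ => hterm j, ← inner_sum, ← hBapp, hBw]
    · rintro t ⟨u, hu, rfl⟩
      set w := P v with hwdef
      set g : ∀ j, Vj j := fun j => Sjinv j (LinearMap.adjoint (R j) w) with hgdef
      have hSg : ∀ j, Sj j (g j) = LinearMap.adjoint (R j) w := fun j => hJinv₂ j _
      have hGU : ∑ j, ⟪Sj j (g j), u j⟫ = ⟪w, v⟫ := by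
        have : ∀ j, ⟪Sj j (g j), u j⟫ = ⟪w, R j (u j)⟫ := by
          intro j; rw [hSg, LinearMap.adjoint_inner_left]
        rw [Finset.sum_congr rfl fun j _ => this j, ← inner_sum, hu]
      have hGG : ∑ j, ⟪Sj j (g j), g j⟫ = ⟪w, v⟫ := by
        have : ∀ j, ⟪Sj j (g j), g j⟫ = ⟪w, R j (g j)⟫ := by
          intro j; rw [hSg, LinearMap.adjoint_inner_left]
        rw [Finset.sum_congr rfl fun j _ => this j, ← inner_sum, ← hBapp, hBw]
      have hexp : ∀ j, ⟪Sj j (u j - g j), u j - g j⟫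
          = ⟪Sj j (u j), u j⟫ - 2 * ⟪Sj j (g j), u j⟫ + ⟪Sj j (g j), g j⟫ := by
        intro j
        have hsym : ⟪Sj j (u j), g j⟫ = ⟪Sj j (g j), u j⟫ := by
          rw [hSjsa, real_inner_comm]
        rw [map_sub, inner_sub_left, inner_sub_right, inner_sub_right, hsym]
        ring
      have hnn : (0:ℝ) ≤ ∑ j, ⟪Sj j (u j - g j), u j - g j⟫ :=
        Finset.sum_nonneg fun j _ => hSjnn j _
      rw [Finset.sum_congr rfl fun j _ => hexp j] at hnn
      rw [Finset.sum_add_distrib, Finset.sum_sub_distrib, ← Finset.mul_sum, hGU, hGG] at hnn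
      linarith
  -- get a nontrivial space from the eigenvalue hypothesis
  obtain ⟨w, hw⟩ := Module.End.HasEigenvalue.exists_hasEigenvector hmax.1
  haveI : Nontrivial V := nontrivial_of_ne w 0 hw.2
  -- maximize the generalized Rayleigh quotient on the unit sphere
  have hScont : Continuous S := S.continuous_of_finiteDimensional
  have hPcont : Continuous P := P.continuous_of_finiteDimensional
  have hfc : ContinuousOn (fun v : V => ⟪S v, v⟫ / ⟪P v, v⟫) (Metric.sphere (0:V) 1) := by
    refine ContinuousOn.div ((hScont.inner continuous_id).continuousOn)
      ((hPcont.inner continuous_id).continuousOn) ?_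
    intro x hx
    have hxne : x ≠ 0 := by
      intro h
      rw [mem_sphere_zero_iff_norm, h, norm_zero] at hx
      norm_num at hx
    exact (hPpos x hxne).ne'
  obtain ⟨x0, hx0mem, hx0max⟩ := (isCompact_sphere (0:V) 1).exists_isMaxOn
    (NormedSpace.sphere_nonempty.mpr zero_le_one) hfc
  have hx0ne : x0 ≠ 0 := by
    intro h
    rw [mem_sphere_zero_iff_norm, h, norm_zero] at hx0mem
    norm_num at hx0mem
  set μ : ℝ := ⟪S x0, x0⟫ / ⟪P x0, x0⟫ with hμdef
  -- scaling invariance gives maximality over all nonzero vectors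
  have hf_le : ∀ v : V, v ≠ 0 → ⟪S v, v⟫ / ⟪P v, v⟫ ≤ μ := by
    intro v hv
    have hnv : ‖v‖ ≠ 0 := norm_ne_zero_iff.mpr hv
    set c : ℝ := ‖v‖⁻¹ with hc
    have hcne : c ≠ 0 := inv_ne_zero hnv
    have hmem : c • v ∈ Metric.sphere (0:V) 1 := by
      rw [mem_sphere_zero_iff_norm, norm_smul, hc, norm_inv, norm_norm,
        inv_mul_cancel₀ hnv]
    have h1 : ⟪S (c • v), c • v⟫ = c ^ 2 * ⟪S v, v⟫ := by
      rw [map_smul, real_inner_smul_left, real_inner_smul_right]; ring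
    have h2 : ⟪P (c • v), c • v⟫ = c ^ 2 * ⟪P v, v⟫ := by
      rw [map_smul, real_inner_smul_left, real_inner_smul_right]; ring
    have := hx0max hmem
    simp only [Set.mem_setOf_eq] at this
    rw [h1, h2, mul_div_mul_left _ _ (pow_ne_zero 2 hcne)] at this
    exact this
  have hq_le : ∀ v : V, ⟪S v, v⟫ ≤ μ * ⟪P v, v⟫ := by
    intro v
    rcases eq_or_ne v 0 with rfl | hv
    · simp
    · have h := hf_le v hv
      have hp := hPpos v hv
      rw [div_le_iff₀ hp] at h
      linarith
  have hq0 : ⟪S x0, x0⟫ = μ * ⟪P x0, x0⟫ := by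
    rw [hμdef, div_mul_cancel₀]
    exact (hPpos x0 hx0ne).ne'
  -- expansion of quadratic forms
  have expand2 : ∀ (A : V →ₗ[ℝ] V), (∀ x y : V, ⟪A x, y⟫ = ⟪x, A y⟫) →
      ∀ (x y : V) (t : ℝ), ⟪A (x + t • y), x + t • y⟫
        = ⟪A x, x⟫ + 2 * t * ⟪A x, y⟫ + t ^ 2 * ⟪A y, y⟫ := by
    intro A hA x y t
    have h1 : ⟪A y, x⟫ = ⟪A x, y⟫ := by rw [hA, real_inner_comm]
    rw [map_add, map_smul, inner_add_left, inner_add_right, inner_add_right,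
      real_inner_smul_left, real_inner_smul_right, real_inner_smul_left,
      real_inner_smul_right, h1]
    ring
  -- the maximizer is an eigenvector
  have heig : ∀ y : V, ⟪S x0, y⟫ = μ * ⟪P x0, y⟫ := by
    intro y
    have hquad : ∀ t : ℝ, (⟪S y, y⟫ - μ * ⟪P y, y⟫) * t ^ 2
        + (2 * (⟪S x0, y⟫ - μ * ⟪P x0, y⟫)) * t ≤ 0 := by
      intro t
      have h := hq_le (x0 + t • y)
      rw [expand2 S hSsa, expand2 P hPsa] at h
      nlinarith [h, hq0]
    have hb := quad_coeff_zero hquad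
    linarith
  have hvec : S x0 = μ • P x0 := by
    have hz : ∀ y : V, ⟪S x0 - μ • P x0, y⟫ = 0 := by
      intro y
      rw [inner_sub_left, real_inner_smul_left]
      linarith [heig y]
    have := hz (S x0 - μ • P x0)
    rw [inner_self_eq_zero] at this
    exact sub_eq_zero.mp this
  have hμeigval : Module.End.HasEigenvalue (B ∘ₗ S) μ := by
    apply Module.End.hasEigenvalue_of_hasEigenvector (x := x0)
    refine ⟨Module.End.mem_eigenspace_iff.mpr ?_, hx0ne⟩
    show B (S x0) = μ • x0
    rw [hvec, map_smul, hBP]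
  have hμle : μ ≤ lammax := hmax.2 hμeigval
  -- facts about the top eigenvector w
  have hEw : B (S w) = lammax • w := by
    have := hw.apply_eq_smul
    simpa [LinearMap.comp_apply] using this
  have hSw : S w ≠ 0 := by
    intro h
    have := hSpd w hw.2
    rw [h, inner_zero_left] at this
    exact lt_irrefl 0 this
  have hlam_pos : 0 < lammax := by
    have h1 : ⟪B (S w), S w⟫ = lammax * ⟪S w, w⟫ := by
      rw [hEw, real_inner_smul_left, real_inner_comm]
    have h2 := hBpos (S w) hSw
    have h3 := hSpd w hw.2
    rw [h1] at h2
    by_contra hc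
    push_neg at hc
    nlinarith
  constructor
  · -- membership
    have hPw : P w = lammax⁻¹ • S w := by
      apply hBinj
      rw [hBP, map_smul, hEw, smul_smul, inv_mul_cancel₀ (ne_of_gt hlam_pos), one_smul]
    refine ⟨w, hw.2, ⟪P w, w⟫, key w, ?_⟩
    have hl : lammax ≠ 0 := ne_of_gt hlam_pos
    have hq' : ⟪S w, w⟫ ≠ 0 := (hSpd w hw.2).ne'
    rw [hPw, real_inner_smul_left]
    field_simp
  · -- upper bound
    rintro r ⟨v, hv, m, hleast, rfl⟩
    have hm : m = ⟪P v, v⟫ := hleast.unique (key v)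
    rw [hm]
    exact le_trans (hf_le v hv) hμle
end

section
/- In the additive Schwarz setting, if for every v ∈ V there exists a decomposition v = Σ_j R_j v_j with Σ_j a_j(v_j,v_j) ≤ C₁ a(v,v), then λ_min(BS) ≥ 1/C₁. -/
open scoped RealInnerProductSpace

/-- Cauchy–Schwarz for a symmetric positive semidefinite operator. -/
lemma cs_aux {W : Type*} [NormedAddCommGroup W] [InnerProductSpace ℝ W]
    (T : W →ₗ[ℝ] W) (hsa : ∀ x y : W, ⟪T x, y⟫ = ⟪x, T y⟫)
    (hpsd : ∀ x : W, 0 ≤ ⟪T x, x⟫) (x y : W) :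
    ⟪T x, y⟫ ^ 2 ≤ ⟪T x, x⟫ * ⟪T y, y⟫ := by
  have key : ∀ t : ℝ, 0 ≤ ⟪T y, y⟫ * (t * t) + (2 * ⟪T x, y⟫) * t + ⟪T x, x⟫ := by
    intro t
    have h0 := hpsd (x + t • y)
    have hyx : ⟪T y, x⟫ = ⟪T x, y⟫ := by rw [hsa, real_inner_comm]
    have hexp : ⟪T (x + t • y), x + t • y⟫
        = ⟪T x, x⟫ + t * ⟪T x, y⟫ + (t * ⟪T y, x⟫ + t * t * ⟪T y, y⟫) := by
      rw [map_add, map_smul, inner_add_left, inner_add_right, inner_add_right,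
        real_inner_smul_left, real_inner_smul_left, real_inner_smul_right,
        real_inner_smul_right]
      ring
    rw [hexp, hyx] at h0
    nlinarith [h0]
  have hd := discrim_le_zero key
  rw [discrim] at hd
  nlinarith [hd]

/-- stable decomposition Σ aⱼ(vⱼ,vⱼ) ≤ C₁ a(v,v) implies
λ_min(BS) ≥ 1/C₁ in the additive Schwarz framework. -/
theorem stmt_10 {V : Type*} [NormedAddCommGroup V] [InnerProductSpace ℝ V]
    [FiniteDimensional ℝ V]
    {J : ℕ} (Vj : Fin J → Type*) [∀ j, NormedAddCommGroup (Vj j)]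
    [∀ j, InnerProductSpace ℝ (Vj j)] [∀ j, FiniteDimensional ℝ (Vj j)]
    (S : V →ₗ[ℝ] V)
    (hSsa : ∀ v w : V, ⟪S v, w⟫ = ⟪v, S w⟫) (hSpd : ∀ v : V, v ≠ 0 → 0 < ⟪S v, v⟫)
    (Sj Sjinv : ∀ j, Vj j →ₗ[ℝ] Vj j)
    (hSjsa : ∀ j (x y : Vj j), ⟪Sj j x, y⟫ = ⟪x, Sj j y⟫)
    (hSjpd : ∀ j (x : Vj j), x ≠ 0 → 0 < ⟪Sj j x, x⟫)
    (hSjinv₁ : ∀ j, Sjinv j ∘ₗ Sj j = LinearMap.id)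
    (hSjinv₂ : ∀ j, Sj j ∘ₗ Sjinv j = LinearMap.id)
    (R : ∀ j, Vj j →ₗ[ℝ] V)
    (hspan : (⨆ j, LinearMap.range (R j)) = ⊤)
    (B : V →ₗ[ℝ] V)
    (hB : B = ∑ j, (R j) ∘ₗ (Sjinv j) ∘ₗ (LinearMap.adjoint (R j)))
    (C₁ : ℝ) (hC₁ : 0 < C₁)
    (hstable : ∀ v : V, ∃ u : ∀ j, Vj j,
      (∑ j, R j (u j)) = v ∧ (∑ j, ⟪Sj j (u j), u j⟫) ≤ C₁ * ⟪S v, v⟫) :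
    ∀ μ : ℝ, Module.End.HasEigenvalue (B ∘ₗ S) μ → 1 / C₁ ≤ μ := by
  intro μ hμ
  obtain ⟨v, hv⟩ := hμ.exists_hasEigenvector
  have hv0 : v ≠ 0 := hv.2
  have hveq : B (S v) = μ • v := hv.apply_eq_smul
  have hP : 0 < ⟪S v, v⟫ := hSpd v hv0
  set P : ℝ := ⟪S v, v⟫ with hPdef
  obtain ⟨u, hu1, hu2⟩ := hstable v
  -- positive semidefiniteness of the Sj
  have hpsd : ∀ j (x : Vj j), 0 ≤ ⟪Sj j x, x⟫ := by
    intro j x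
    by_cases hx : x = 0
    · simp [hx]
    · exact (hSjpd j x hx).le
  -- w j = Sjinv j (Rjᵀ S v)
  set w : ∀ j, Vj j := fun j => Sjinv j ((LinearMap.adjoint (R j)) (S v)) with hwdef
  have hSw : ∀ j, Sj j (w j) = (LinearMap.adjoint (R j)) (S v) := by
    intro j
    have := LinearMap.ext_iff.mp (hSjinv₂ j) ((LinearMap.adjoint (R j)) (S v))
    simpa [hwdef] using this
  -- P = Σ ⟪Sj wj, uj⟫
  have hPsum : P = ∑ j, ⟪Sj j (w j), u j⟫ := by
    have : P = ⟪S v, ∑ j, R j (u j)⟫ := by rw [hu1]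
    rw [this, inner_sum]
    refine Finset.sum_congr rfl fun j _ => ?_
    rw [hSw j, LinearMap.adjoint_inner_left]
  -- Q = Σ ⟪Sj wj, wj⟫ = μ * P
  set Q : ℝ := ∑ j, ⟪Sj j (w j), w j⟫ with hQdef
  have hQ0 : 0 ≤ Q := Finset.sum_nonneg fun j _ => hpsd j (w j)
  have hQ : Q = μ * P := by
    have h1 : Q = ⟪S v, B (S v)⟫ := by
      have hBv : B (S v) = ∑ j, R j (w j) := by
        rw [hB, LinearMap.sum_apply]
        rfl
      rw [hBv, inner_sum]
      refine Finset.sum_congr rfl fun j _ => ?_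
      rw [hSw j, LinearMap.adjoint_inner_left]
    rw [h1, hveq, inner_smul_right]
  -- Cauchy–Schwarz termwise and for sums
  have hterm : ∀ j, ⟪Sj j (w j), u j⟫
      ≤ Real.sqrt ⟪Sj j (w j), w j⟫ * Real.sqrt ⟪Sj j (u j), u j⟫ := by
    intro j
    have hcs := cs_aux (Sj j) (hSjsa j) (hpsd j) (w j) (u j)
    have h1 : ⟪Sj j (w j), u j⟫ ≤ |⟪Sj j (w j), u j⟫| := le_abs_self _
    have h2 : |⟪Sj j (w j), u j⟫| = Real.sqrt (⟪Sj j (w j), u j⟫ ^ 2) := by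
      rw [Real.sqrt_sq_eq_abs]
    calc ⟪Sj j (w j), u j⟫ ≤ Real.sqrt (⟪Sj j (w j), u j⟫ ^ 2) := by rw [← h2]; exact h1
      _ ≤ Real.sqrt (⟪Sj j (w j), w j⟫ * ⟪Sj j (u j), u j⟫) := Real.sqrt_le_sqrt hcs
      _ = Real.sqrt ⟪Sj j (w j), w j⟫ * Real.sqrt ⟪Sj j (u j), u j⟫ :=
        Real.sqrt_mul (hpsd j (w j)) _
  have hPle : P ≤ Real.sqrt Q * Real.sqrt (∑ j, ⟪Sj j (u j), u j⟫) := by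
    calc P = ∑ j, ⟪Sj j (w j), u j⟫ := hPsum
      _ ≤ ∑ j, Real.sqrt ⟪Sj j (w j), w j⟫ * Real.sqrt ⟪Sj j (u j), u j⟫ :=
        Finset.sum_le_sum fun j _ => hterm j
      _ ≤ Real.sqrt Q * Real.sqrt (∑ j, ⟪Sj j (u j), u j⟫) :=
        Real.sum_sqrt_mul_sqrt_le _ (fun j => hpsd j (w j)) (fun j => hpsd j (u j))
  -- conclude P² ≤ Q * (C₁ * P)
  have hsq : P ^ 2 ≤ Q * (C₁ * P) := by
    have hsum0 : 0 ≤ ∑ j, ⟪Sj j (u j), u j⟫ := Finset.sum_nonneg fun j _ => hpsd j (u j)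
    have h1 : P ^ 2 ≤ (Real.sqrt Q * Real.sqrt (∑ j, ⟪Sj j (u j), u j⟫)) ^ 2 := by
      apply pow_le_pow_left₀ hP.le hPle
    have h2 : (Real.sqrt Q * Real.sqrt (∑ j, ⟪Sj j (u j), u j⟫)) ^ 2
        = Q * (∑ j, ⟪Sj j (u j), u j⟫) := by
      rw [mul_pow, Real.sq_sqrt hQ0, Real.sq_sqrt hsum0]
    have h3 : Q * (∑ j, ⟪Sj j (u j), u j⟫) ≤ Q * (C₁ * P) :=
      mul_le_mul_of_nonneg_left hu2 hQ0
    linarith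
  rw [hQ] at hsq
  rw [div_le_iff₀ hC₁]
  nlinarith [hsq, pow_pos hP 2]
end

section
/- In the additive Schwarz setting, if every decomposition v = Σ_j R_j v_j satisfies a(v,v) ≤ C₂ Σ_j a_j(v_j,v_j), then λ_max(BS) ≤ C₂. -/
open scoped RealInnerProductSpace

/-- boundedness a(v,v) ≤ C₂ Σ aⱼ(vⱼ,vⱼ) for every decomposition
implies λ_max(BS) ≤ C₂ in the additive Schwarz framework. -/
theorem stmt_11 {V : Type*} [NormedAddCommGroup V] [InnerProductSpace ℝ V]
    [FiniteDimensional ℝ V]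
    {J : ℕ} (Vj : Fin J → Type*) [∀ j, NormedAddCommGroup (Vj j)]
    [∀ j, InnerProductSpace ℝ (Vj j)] [∀ j, FiniteDimensional ℝ (Vj j)]
    (S : V →ₗ[ℝ] V)
    (hSsa : ∀ v w : V, ⟪S v, w⟫ = ⟪v, S w⟫) (hSpd : ∀ v : V, v ≠ 0 → 0 < ⟪S v, v⟫)
    (Sj Sjinv : ∀ j, Vj j →ₗ[ℝ] Vj j)
    (hSjsa : ∀ j (x y : Vj j), ⟪Sj j x, y⟫ = ⟪x, Sj j y⟫)
    (hSjpd : ∀ j (x : Vj j), x ≠ 0 → 0 < ⟪Sj j x, x⟫)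
    (hSjinv₁ : ∀ j, Sjinv j ∘ₗ Sj j = LinearMap.id)
    (hSjinv₂ : ∀ j, Sj j ∘ₗ Sjinv j = LinearMap.id)
    (R : ∀ j, Vj j →ₗ[ℝ] V)
    (hspan : (⨆ j, LinearMap.range (R j)) = ⊤)
    (B : V →ₗ[ℝ] V)
    (hB : B = ∑ j, (R j) ∘ₗ (Sjinv j) ∘ₗ (LinearMap.adjoint (R j)))
    (C₂ : ℝ) (hC₂ : 0 < C₂)
    (hbound : ∀ (v : V) (u : ∀ j, Vj j),
      (∑ j, R j (u j)) = v → ⟪S v, v⟫ ≤ C₂ * ∑ j, ⟪Sj j (u j), u j⟫) :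
    ∀ μ : ℝ, Module.End.HasEigenvalue (B ∘ₗ S) μ → μ ≤ C₂ := by

  intro μ hμ
  obtain ⟨v, hv⟩ := hμ.exists_hasEigenvector
  have hv0 : v ≠ 0 := hv.right
  have hvμ : B (S v) = μ • v := hv.apply_eq_smul
  set u : ∀ j, Vj j := fun j => Sjinv j ((LinearMap.adjoint (R j)) (S v)) with hu
  have hsum : (∑ j, R j (u j)) = μ • v := by
    rw [← hvμ, hB, LinearMap.sum_apply]
    rfl
  have hbd := hbound (μ • v) u hsum
  have hterm : ∀ j, ⟪Sj j (u j), u j⟫ = ⟪S v, R j (u j)⟫ := by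
    intro j
    have h1 : Sj j (u j) = (LinearMap.adjoint (R j)) (S v) := by
      have := congrArg (fun f => f ((LinearMap.adjoint (R j)) (S v))) (hSjinv₂ j)
      simpa [hu] using this
    rw [h1, LinearMap.adjoint_inner_left]
  have hrhs : (∑ j, ⟪Sj j (u j), u j⟫) = μ * ⟪S v, v⟫ := by
    calc (∑ j, ⟪Sj j (u j), u j⟫) = ∑ j, ⟪S v, R j (u j)⟫ := by
          exact Finset.sum_congr rfl fun j _ => hterm j
      _ = ⟪S v, ∑ j, R j (u j)⟫ := by rw [inner_sum]
      _ = ⟪S v, μ • v⟫ := by rw [hsum]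
      _ = μ * ⟪S v, v⟫ := by rw [real_inner_smul_right]
  have hlhs : ⟪S (μ • v), μ • v⟫ = μ * μ * ⟪S v, v⟫ := by
    rw [map_smul, real_inner_smul_left, real_inner_smul_right]; ring
  rw [hlhs, hrhs] at hbd
  have hp : 0 < ⟪S v, v⟫ := hSpd v hv0
  rcases le_or_gt μ 0 with h | h
  · linarith
  · nlinarith [mul_pos h hp]
end
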